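/- Let (X,d) be a metric space and s ∈ [0,1) such that d(x,z) ≤ s(d(x,y) + d(y,z)) for all pairwise distinct x,y,z ∈ X (the s-constrained triangle inequality). Then there is no injective sequence (x_n) of points in X such that the series ∑_{i=1}^∞ d(x_i, x_{i+1}) converges. -/

import Mathlib

theorem stmt_19 {X : Type*} [MetricSpace X] (s : ℝ) (hs0 : 0 ≤ s) (hs1 : s < 1)
    (hcon : ∀ x y z : X, x ≠ y → y ≠ z → x ≠ z →
      dist x z ≤ s * (dist x y + dist y z)) :
    ¬ ∃ u : ℕ → X, Function.Injective u ∧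
      Summable (fun i => dist (u i) (u (i + 1))) := by
  rintro ⟨u, hinj, hsum⟩
  have hs1' : (0:ℝ) < 1 - s := by linarith
  have hcauchy : CauchySeq u := cauchySeq_of_summable_dist hsum
  rw [Metric.cauchySeq_iff] at hcauchy
  -- crux: every point u k is approached arbitrarily closely by later terms
  have crux : ∀ k : ℕ, ∀ ε > (0:ℝ), ∀ N : ℕ, ∃ n, N ≤ n ∧ k < n ∧ dist (u k) (u n) < ε := by
    intro k ε hε N
    set ε₁ := ε * (1 - s) / 2 with hε₁def
    have hε₁ : 0 < ε₁ := by positivity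
    obtain ⟨N', hN'⟩ := hcauchy ε₁ hε₁
    set M := max N' (max N (k+1)) with hM
    have hMN' : N' ≤ M := le_max_left _ _
    have hMN : N ≤ M := le_trans (le_max_left _ _) (le_max_right _ _)
    have hMk : k < M := lt_of_lt_of_le (Nat.lt_succ_self k)
      (le_trans (le_max_right _ _) (le_max_right _ _))
    refine ⟨M, hMN, hMk, ?_⟩
    have step : ∀ i : ℕ, dist (u k) (u (M + i)) ≤
        s * dist (u k) (u (M + i + 1)) + s * ε₁ := by
      intro i
      have h1 : k ≠ M + i + 1 := by omega
      have h2 : M + i + 1 ≠ M + i := by omega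
      have h3 : k ≠ M + i := by omega
      have h := hcon (u k) (u (M + i + 1)) (u (M + i)) (hinj.ne h1) (hinj.ne h2) (hinj.ne h3)
      have hd : dist (u (M + i + 1)) (u (M + i)) < ε₁ := hN' _ (by omega) _ (by omega)
      nlinarith
    have iter : ∀ j : ℕ, dist (u k) (u M) ≤
        s ^ j * dist (u k) (u (M + j)) + ε₁ * s * ∑ i ∈ Finset.range j, s ^ i := by
      intro j
      induction j with
      | zero => simp
      | succ j ih =>
        have hspow : (0:ℝ) ≤ s ^ j := pow_nonneg hs0 j
        have hstep := mul_le_mul_of_nonneg_left (step j) hspow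
        have hM1 : M + (j + 1) = M + j + 1 := rfl
        rw [hM1, Finset.sum_range_succ, pow_succ]
        nlinarith [ih, hstep]
    have hsum_bound : ∀ j : ℕ, (∑ i ∈ Finset.range j, s ^ i) ≤ (1 - s)⁻¹ := by
      intro j
      have h := geom_sum_eq (ne_of_lt hs1) j
      have hpow : (0:ℝ) ≤ s ^ j := pow_nonneg hs0 j
      rw [h, div_le_iff_of_neg (by linarith : s - 1 < 0)]
      have key : (1 - s)⁻¹ * (s - 1) = -1 := by field_simp; ring
      linarith
    set C := dist (u k) (u M) + ε₁ with hC
    have hCpos : 0 < C := by have := dist_nonneg (x := u k) (y := u M); positivity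
    have hlim : Filter.Tendsto (fun j : ℕ => s ^ j) Filter.atTop (nhds 0) :=
      tendsto_pow_atTop_nhds_zero_of_lt_one hs0 hs1
    obtain ⟨j, hj⟩ := (Filter.eventually_atTop.1
      (hlim.eventually (gt_mem_nhds (by positivity : (0:ℝ) < ε / (2 * C))))) 
    have hsj : s ^ j < ε / (2 * C) := hj j le_rfl
    have hdj : dist (u k) (u (M + j)) ≤ C := by
      have h1 : dist (u k) (u (M + j)) ≤ dist (u k) (u M) + dist (u M) (u (M + j)) :=
        dist_triangle _ _ _
      have h2 : dist (u M) (u (M + j)) < ε₁ := hN' _ (by omega) _ (by omega)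
      linarith
    have hiter := iter j
    have hsumj := hsum_bound j
    have hspow : (0:ℝ) ≤ s ^ j := pow_nonneg hs0 j
    have hsum_nonneg : (0:ℝ) ≤ ∑ i ∈ Finset.range j, s ^ i :=
      Finset.sum_nonneg fun i _ => pow_nonneg hs0 i
    have h1 : s ^ j * dist (u k) (u (M + j)) ≤ s ^ j * C :=
      mul_le_mul_of_nonneg_left hdj hspow
    have h2 : s ^ j * C < ε / 2 := by
      calc s ^ j * C < ε / (2 * C) * C := by
            exact mul_lt_mul_of_pos_right hsj hCpos
        _ = ε / 2 := by field_simp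
    have h3 : ε₁ * s * (∑ i ∈ Finset.range j, s ^ i) ≤ ε₁ * (1 - s)⁻¹ := by
      have hs_le : s * (∑ i ∈ Finset.range j, s ^ i) ≤ (1 - s)⁻¹ := by
        calc s * (∑ i ∈ Finset.range j, s ^ i) ≤ 1 * (∑ i ∈ Finset.range j, s ^ i) := by
              exact mul_le_mul_of_nonneg_right (le_of_lt hs1) hsum_nonneg
          _ = ∑ i ∈ Finset.range j, s ^ i := one_mul _
          _ ≤ (1 - s)⁻¹ := hsumj
      calc ε₁ * s * (∑ i ∈ Finset.range j, s ^ i) = ε₁ * (s * ∑ i ∈ Finset.range j, s ^ i) := by ring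
        _ ≤ ε₁ * (1 - s)⁻¹ := mul_le_mul_of_nonneg_left hs_le (le_of_lt hε₁)
    have h4 : ε₁ * (1 - s)⁻¹ = ε / 2 := by
      rw [hε₁def]; field_simp
    nlinarith [hiter, h1, h2, h3, h4]
  -- Final assembly
  have hd01 : 0 < dist (u 0) (u 1) := dist_pos.2 (hinj.ne (by norm_num))
  set ε' := dist (u 0) (u 1) / 3 with hε'def
  have hε' : 0 < ε' := by positivity
  obtain ⟨N'', hN''⟩ := hcauchy ε' hε'
  obtain ⟨n, hnN, hn0, hdn⟩ := crux 0 ε' hε' (max N'' 2)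
  obtain ⟨m, hmN, hm1, hdm⟩ := crux 1 ε' hε' (n + 1)
  have hn2 : 2 ≤ n := le_trans (le_max_right _ _) hnN
  have hnN'' : N'' ≤ n := le_trans (le_max_left _ _) hnN
  have hmn : n < m := hmN
  have hdnm : dist (u n) (u m) < ε' := hN'' _ (by omega) _ (by omega)
  have hB : dist (u n) (u 1) ≤ s * (dist (u n) (u m) + dist (u m) (u 1)) :=
    hcon (u n) (u m) (u 1) (hinj.ne (by omega)) (hinj.ne (by omega)) (hinj.ne (by omega))
  have hA : dist (u 0) (u 1) ≤ s * (dist (u 0) (u n) + dist (u n) (u 1)) :=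
    hcon (u 0) (u n) (u 1) (hinj.ne (by omega)) (hinj.ne (by omega)) (hinj.ne (by norm_num))
  have hdm1 : dist (u m) (u 1) < ε' := by rw [dist_comm]; exact hdm
  have hnn : (0:ℝ) ≤ dist (u n) (u m) := dist_nonneg
  have hnn2 : (0:ℝ) ≤ dist (u m) (u 1) := dist_nonneg
  have hnn3 : (0:ℝ) ≤ dist (u 0) (u n) := dist_nonneg
  have hnnB : (0:ℝ) ≤ dist (u n) (u 1) := dist_nonneg
  have hB2 : dist (u n) (u 1) < 2 * ε' := by
    nlinarith [mul_nonneg hs1'.le (add_nonneg hnn hnn2)]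
  have hA2 : dist (u 0) (u 1) < 3 * ε' := by
    nlinarith [mul_nonneg hs1'.le (add_nonneg hnn3 hnnB)]
  rw [hε'def] at hA2
  linarith
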